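/- Let (x_j) be a sequence in ℝ^d and (r_j), (r'_j) positive sequences converging to 0 with r_j ≍ r'_j (i.e. C^{−1} r'_j ≤ r_j ≤ C r'_j for some C > 0). Then the sets {x : x ∈ B(x_j, r_j) for infinitely many j} and {x : x ∈ B(x_j, r'_j) for infinitely many j} have equal Lebesgue measure. -/
import Mathlib

open MeasureTheory

/-- Comparable radii give limsup sets of balls of equal Lebesgue measure. -/
theorem limsup_balls_comparable_radii {d : ℕ} (x : ℕ → EuclideanSpace ℝ (Fin d))
    (r r' : ℕ → ℝ) (hr : ∀ j, 0 < r j) (hr' : ∀ j, 0 < r' j)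
    (hr0 : Filter.Tendsto r Filter.atTop (nhds 0))
    (hr'0 : Filter.Tendsto r' Filter.atTop (nhds 0))
    (hcomp : ∃ C > (0:ℝ), ∀ j, C⁻¹ * r' j ≤ r j ∧ r j ≤ C * r' j) :
    volume {y | {j | y ∈ Metric.closedBall (x j) (r j)}.Infinite} =
      volume {y | {j | y ∈ Metric.closedBall (x j) (r' j)}.Infinite} := by
  obtain ⟨C, hC, hCr⟩ := hcomp
  have key : ∀ (ρ : ℕ → ℝ), (∀ j, 0 < ρ j) → ∀ {y : EuclideanSpace ℝ (Fin d)}, y ∈ {y : EuclideanSpace ℝ (Fin d) |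
      {j | y ∈ Metric.closedBall (x j) (ρ j)}.Infinite} ↔ y ∈
      Filter.blimsup (fun j => Metric.cthickening (ρ j) {x j}) Filter.atTop (fun _ => True) := by
    intro ρ hρ y
    simp only [Filter.blimsup_true, Filter.mem_limsup_iff_frequently_mem, Set.mem_setOf_eq,
      ← Nat.frequently_atTop_iff_infinite (p := fun j => y ∈ Metric.closedBall (x j) (ρ j))]
    apply Filter.frequently_congr
    filter_upwards with j
    rw [Metric.cthickening_singleton _ (hρ j).le]
  rw [show {y : EuclideanSpace ℝ (Fin d) | {j | y ∈ Metric.closedBall (x j) (r j)}.Infinite}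
      = Filter.blimsup (fun j => Metric.cthickening (r j) {x j}) Filter.atTop (fun _ => True)
      from Set.ext fun y => key r hr,
    show {y : EuclideanSpace ℝ (Fin d) | {j | y ∈ Metric.closedBall (x j) (r' j)}.Infinite}
      = Filter.blimsup (fun j => Metric.cthickening (r' j) {x j}) Filter.atTop (fun _ => True)
      from Set.ext fun y => key r' hr']
  have hrpos : Filter.Tendsto r Filter.atTop (nhdsWithin 0 (Set.Ioi 0)) :=
    tendsto_nhdsWithin_iff.mpr ⟨hr0, Filter.Eventually.of_forall fun j => hr j⟩
  have hr'pos : Filter.Tendsto r' Filter.atTop (nhdsWithin 0 (Set.Ioi 0)) :=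
    tendsto_nhdsWithin_iff.mpr ⟨hr'0, Filter.Eventually.of_forall fun j => hr' j⟩
  refine measure_congr (Filter.eventuallyLE_antisymm_iff.mpr ⟨?_, ?_⟩)
  · exact blimsup_cthickening_ae_le_of_eventually_mul_le volume (fun _ => True)
      (inv_pos.mpr hC) hrpos (Filter.Eventually.of_forall fun j => by
        have := (hCr j).2
        rw [inv_mul_le_iff₀ hC]
        linarith)
  · exact blimsup_cthickening_ae_le_of_eventually_mul_le volume (fun _ => True)
      (inv_pos.mpr hC) hr'pos (Filter.Eventually.of_forall fun j => (hCr j).1)
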